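/- For every real r ≥ 1, the constants γ̄_{h^{(r)}} satisfy γ̄_{h^{(r)}} ≥ γ̄_{h^{(r+1)}}; that is, the map r ↦ γ̄_{h^{(r)}} is non-increasing on [1, ∞). -/

import Mathlib

open MeasureTheory Filter Topology

/-- The digamma function `ψ(x) = Γ'(x)/Γ(x)`. -/
noncomputable def digamma (x : ℝ) : ℝ := deriv Real.Gamma x / Real.Gamma x

/-- The rising factorial `x^{r̄} = Γ(x+r)/Γ(x)`. -/
noncomputable def rise (x r : ℝ) : ℝ := Real.Gamma (x + r) / Real.Gamma x

/-- The analytic extension of the hyperharmonic numbers: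
`h_x^{(r)} = (x^{r̄}/(x Γ(r)))(ψ(x+r) − ψ(r))` for `r > 0`, and `h_x^{(0)} = 1/x`. -/
noncomputable def hyp (r x : ℝ) : ℝ :=
  if r = 0 then 1 / x
  else rise x r / (x * Real.Gamma r) * (digamma (x + r) - digamma r)

/-- `y_n(r) = ∑_{k=1}^n h_k^{(r)}/k^r − ∫_1^n h_x^{(r)}/x^r dx`. -/
noncomputable def yseq (r : ℝ) (n : ℕ) : ℝ :=
  ∑ k ∈ Finset.Icc 1 n, hyp r k / (k : ℝ) ^ r - ∫ x in (1:ℝ)..(n:ℝ), hyp r x / x ^ r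

/-- `z_n(r) = ∑_{k=1}^{n-1} h_k^{(r)}/k^r − ∫_1^n h_x^{(r)}/x^r dx`. -/
noncomputable def zseq (r : ℝ) (n : ℕ) : ℝ :=
  ∑ k ∈ Finset.Icc 1 (n - 1), hyp r k / (k : ℝ) ^ r - ∫ x in (1:ℝ)..(n:ℝ), hyp r x / x ^ r

/-- `b_n(r) = ∑_{k=1}^n h_k^{(r)}/k^{r̄} − ∫_1^n h_x^{(r)}/x^{r̄} dx`. -/
noncomputable def bseq (r : ℝ) (n : ℕ) : ℝ :=
  ∑ k ∈ Finset.Icc 1 n, hyp r k / rise k r - ∫ x in (1:ℝ)..(n:ℝ), hyp r x / rise x r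

/-- `a_n(r) = ∑_{k=1}^{n-1} h_k^{(r)}/k^{r̄} − ∫_1^n h_x^{(r)}/x^{r̄} dx`. -/
noncomputable def aseq (r : ℝ) (n : ℕ) : ℝ :=
  ∑ k ∈ Finset.Icc 1 (n - 1), hyp r k / rise k r - ∫ x in (1:ℝ)..(n:ℝ), hyp r x / rise x r

/-! ### Auxiliary lemmas on the digamma function -/

lemma diffGamma {t : ℝ} (ht : 0 < t) : DifferentiableAt ℝ Real.Gamma t :=
  Real.differentiableAt_Gamma fun m =>
    (lt_of_le_of_lt (neg_nonpos.mpr (Nat.cast_nonneg m)) ht).ne'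

lemma diffLogGamma {t : ℝ} (ht : 0 < t) :
    DifferentiableAt ℝ (fun y => Real.log (Real.Gamma y)) t :=
  (diffGamma ht).log (Real.Gamma_pos_of_pos ht).ne'

lemma digamma_eq_deriv {t : ℝ} (ht : 0 < t) :
    digamma t = deriv (fun y => Real.log (Real.Gamma y)) t := by
  rw [deriv.log (diffGamma ht) (Real.Gamma_pos_of_pos ht).ne']; rfl

lemma digamma_mono {u v : ℝ} (hu : 0 < u) (huv : u ≤ v) : digamma u ≤ digamma v := by
  have hv : 0 < v := lt_of_lt_of_le hu huv
  have hconv : ConvexOn ℝ (Set.Ioi 0) (fun y => Real.log (Real.Gamma y)) := by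
    simpa [Function.comp_def] using Real.convexOn_log_Gamma
  have hmono := hconv.monotoneOn_deriv (fun t ht => diffLogGamma (Set.mem_Ioi.mp ht))
  rw [digamma_eq_deriv hu, digamma_eq_deriv hv]
  exact hmono (Set.mem_Ioi.mpr hu) (Set.mem_Ioi.mpr hv) huv

lemma digamma_add_one {x : ℝ} (hx : 0 < x) : digamma (x + 1) = digamma x + 1 / x := by
  rw [digamma_eq_deriv (by linarith), digamma_eq_deriv hx]
  rw [← deriv_comp_add_const (fun y => Real.log (Real.Gamma y)) 1 x]
  rw [one_div, ← Real.deriv_log x,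
    ← deriv_add (diffLogGamma hx) (Real.differentiableAt_log hx.ne')]
  apply Filter.EventuallyEq.deriv_eq
  filter_upwards [eventually_gt_nhds hx] with y hy
  rw [Real.Gamma_add_one hy.ne', Real.log_mul hy.ne' (Real.Gamma_pos_of_pos hy).ne', add_comm]
  rfl

lemma digamma_add_nat {y : ℝ} (hy : 0 < y) (n : ℕ) :
    digamma (y + n) = digamma y + ∑ k ∈ Finset.range n, 1 / ((k : ℝ) + y) := by
  induction n with
  | zero => simp
  | succ n ih =>
    have h1 : y + ((n : ℕ) + 1 : ℕ) = (y + n) + 1 := by push_cast; ring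
    have h2 : (0:ℝ) < y + n := by have := Nat.cast_nonneg (α := ℝ) n; linarith
    rw [h1, digamma_add_one h2, ih, Finset.sum_range_succ]
    rw [add_assoc]
    congr 1
    congr 1
    rw [add_comm]

/-! ### The series `φ_a(x) = ∑ 1/((n+a)(n+a+x))` -/

noncomputable def phi (a x : ℝ) : ℝ := ∑' n : ℕ, 1 / (((n : ℝ) + a) * ((n : ℝ) + a + x))

lemma summable_base : Summable (fun n : ℕ => 1 / ((n : ℝ) + 1) ^ 2) := by
  have h : Summable (fun n : ℕ => 1 / (n : ℝ) ^ 2) :=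
    Real.summable_one_div_nat_pow.mpr one_lt_two
  have h2 := (_root_.summable_nat_add_iff (f := fun n : ℕ => 1 / (n : ℝ) ^ 2) 1).mpr h
  refine h2.congr fun n => ?_
  push_cast
  ring

lemma summable_phi {a x : ℝ} (ha : 1 ≤ a) (hx : 0 ≤ x) :
    Summable (fun n : ℕ => 1 / (((n : ℝ) + a) * ((n : ℝ) + a + x))) := by
  refine Summable.of_nonneg_of_le (fun n => ?_) (fun n => ?_) summable_base
  · have hn : (0:ℝ) ≤ n := Nat.cast_nonneg n
    have h1 : (0:ℝ) ≤ ((n : ℝ) + a) * ((n : ℝ) + a + x) := by nlinarith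
    positivity
  · have hn : (0:ℝ) ≤ n := Nat.cast_nonneg n
    apply one_div_le_one_div_of_le (by positivity)
    nlinarith

lemma phi_nonneg {a x : ℝ} (ha : 1 ≤ a) (hx : 0 ≤ x) : 0 ≤ phi a x := by
  apply tsum_nonneg
  intro n
  have hn : (0:ℝ) ≤ n := Nat.cast_nonneg n
  have h1 : (0:ℝ) ≤ ((n : ℝ) + a) * ((n : ℝ) + a + x) := by nlinarith
  positivity

lemma phi_anti {a : ℝ} (ha : 1 ≤ a) {x y : ℝ} (hx : 0 ≤ x) (hxy : x ≤ y) :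
    phi a y ≤ phi a x := by
  apply Summable.tsum_le_tsum (fun n => ?_) (summable_phi ha (hx.trans hxy)) (summable_phi ha hx)
  have hn : (0:ℝ) ≤ n := Nat.cast_nonneg n
  apply one_div_le_one_div_of_le (by nlinarith)
  nlinarith

lemma phi_succ {a x : ℝ} (ha : 1 ≤ a) (hx : 0 ≤ x) :
    phi a x = 1 / (a * (a + x)) + phi (a + 1) x := by
  rw [phi, Summable.tsum_eq_zero_add (summable_phi ha hx)]
  congr 1
  · norm_num
  · rw [phi]
    apply tsum_congr
    intro n
    congr 1
    push_cast
    ring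

/-! ### Digamma difference as a series -/

lemma digamma_diff {a x : ℝ} (ha : 1 ≤ a) (hx : 0 ≤ x) :
    digamma (a + x) - digamma a = x * phi a x := by
  have ha0 : (0:ℝ) < a := by linarith
  have hax : (0:ℝ) < a + x := by linarith
  have hterm : ∀ n : ℕ, 1 / ((n : ℝ) + a) - 1 / ((n : ℝ) + a + x)
      = x * (1 / (((n : ℝ) + a) * ((n : ℝ) + a + x))) := by
    intro n
    have hn : (0:ℝ) ≤ n := Nat.cast_nonneg n
    have h1 : ((n : ℝ) + a) ≠ 0 := by positivity
    have h2 : ((n : ℝ) + a + x) ≠ 0 := by positivity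
    field_simp
    try ring
  have hsum : Summable (fun n : ℕ => 1 / ((n : ℝ) + a) - 1 / ((n : ℝ) + a + x)) :=
    Summable.congr ((summable_phi ha hx).mul_left x) fun n => (hterm n).symm
  have hS : ∀ m : ℕ, ∑ k ∈ Finset.range m, (1 / ((k : ℝ) + a) - 1 / ((k : ℝ) + a + x))
      = (digamma (a + x) - digamma a) - (digamma (a + x + m) - digamma (a + m)) := by
    intro m
    have h1 := digamma_add_nat ha0 m
    have h2 := digamma_add_nat hax m
    have e2 : ∑ k ∈ Finset.range m, 1 / ((k : ℝ) + a + x)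
        = ∑ k ∈ Finset.range m, 1 / ((k : ℝ) + (a + x)) :=
      Finset.sum_congr rfl fun k _ => by rw [add_assoc]
    rw [Finset.sum_sub_distrib, e2]
    linarith [h1, h2]
  set N := Nat.ceil x with hN
  have hxN : x ≤ N := Nat.le_ceil x
  have heps_lb : ∀ m : ℕ, 0 ≤ digamma (a + x + m) - digamma (a + m) := by
    intro m
    have hm : (0:ℝ) ≤ m := Nat.cast_nonneg m
    have := digamma_mono (by linarith : (0:ℝ) < a + m) (by linarith : a + m ≤ a + x + m)
    linarith
  have heps_ub : ∀ m : ℕ, digamma (a + x + m) - digamma (a + m) ≤ N / (a + m) := by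
    intro m
    have hm : (0:ℝ) ≤ m := Nat.cast_nonneg m
    have ham : (0:ℝ) < a + m := by linarith
    have h3 : digamma (a + x + m) ≤ digamma ((a + m) + N) := by
      apply digamma_mono (by linarith) (by linarith)
    have h4 := digamma_add_nat ham N
    have h5 : ∑ j ∈ Finset.range N, 1 / ((j : ℝ) + (a + m))
        ≤ ∑ j ∈ Finset.range N, 1 / (a + m) := by
      apply Finset.sum_le_sum
      intro j _
      have hj : (0:ℝ) ≤ j := Nat.cast_nonneg j
      apply one_div_le_one_div_of_le ham (by linarith)
    rw [Finset.sum_const, Finset.card_range, nsmul_eq_mul] at h5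
    have h6 : (N : ℝ) * (1 / (a + m)) = N / (a + m) := by ring
    linarith [h3, h4, h5]
  have hub0 : Tendsto (fun m : ℕ => (N : ℝ) / (a + m)) atTop (𝓝 0) := by
    apply Tendsto.div_atTop (tendsto_const_nhds)
    exact tendsto_atTop_add_const_left _ a tendsto_natCast_atTop_atTop
  have heps : Tendsto (fun m : ℕ => digamma (a + x + m) - digamma (a + m)) atTop (𝓝 0) :=
    squeeze_zero heps_lb heps_ub hub0
  have hlim1 : Tendsto
      (fun m : ℕ => ∑ k ∈ Finset.range m, (1 / ((k : ℝ) + a) - 1 / ((k : ℝ) + a + x)))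
      atTop (𝓝 (x * phi a x)) := by
    have h := hsum.hasSum.tendsto_sum_nat
    have ht : ∑' n : ℕ, (1 / ((n : ℝ) + a) - 1 / ((n : ℝ) + a + x)) = x * phi a x := by
      rw [tsum_congr hterm, tsum_mul_left, phi]
    rwa [ht] at h
  have hlim2 : Tendsto
      (fun m : ℕ => ∑ k ∈ Finset.range m, (1 / ((k : ℝ) + a) - 1 / ((k : ℝ) + a + x)))
      atTop (𝓝 ((digamma (a + x) - digamma a) - 0)) :=
    Tendsto.congr (fun m => (hS m).symm) (tendsto_const_nhds.sub heps)
  have := tendsto_nhds_unique hlim1 hlim2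
  rw [sub_zero] at this
  exact this.symm

/-! ### The normalized hyperharmonic summand -/

noncomputable def Ff (s : ℝ) : ℝ → ℝ := fun x => phi s x / Real.Gamma s

lemma Ff_anti {s : ℝ} (hs : 1 ≤ s) : AntitoneOn (Ff s) (Set.Ici (1:ℝ)) := by
  intro x hx y hy hxy
  have hΓ : (0:ℝ) < Real.Gamma s := Real.Gamma_pos_of_pos (by linarith)
  have h := phi_anti hs (by linarith [Set.mem_Ici.mp hx] : (0:ℝ) ≤ x) hxy
  exact (div_le_div_iff_of_pos_right hΓ).mpr h

lemma hyp_div_rise {s : ℝ} (hs : 1 ≤ s) {x : ℝ} (hx : 1 ≤ x) :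
    hyp s x / rise x s = Ff s x := by
  have hs0 : (0:ℝ) < s := by linarith
  have hx0 : (0:ℝ) < x := by linarith
  have hΓs : (0:ℝ) < Real.Gamma s := Real.Gamma_pos_of_pos hs0
  have hΓx : (0:ℝ) < Real.Gamma x := Real.Gamma_pos_of_pos hx0
  have hΓxs : (0:ℝ) < Real.Gamma (x + s) := Real.Gamma_pos_of_pos (by linarith)
  have hrise : (0:ℝ) < rise x s := div_pos hΓxs hΓx
  have hdg : digamma (x + s) - digamma s = x * phi s x := by
    rw [add_comm x s]
    exact digamma_diff hs hx0.le
  simp only [hyp, if_neg hs0.ne', hdg, Ff]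
  field_simp

lemma Ff_sub_eq {r : ℝ} (hr : 1 ≤ r) {x : ℝ} (hx : 0 ≤ x) :
    Ff r x - Ff (r + 1) x
      = ((1 - 1 / r) * phi r x + 1 / (r ^ 2 * (r + x))) / Real.Gamma r := by
  have hr0 : (0:ℝ) < r := by linarith
  have hΓ : (0:ℝ) < Real.Gamma r := Real.Gamma_pos_of_pos hr0
  have h1 : phi r x = 1 / (r * (r + x)) + phi (r + 1) x := phi_succ hr hx
  have h2 : Real.Gamma (r + 1) = r * Real.Gamma r := Real.Gamma_add_one hr0.ne'
  have hrx : (0:ℝ) < r + x := by linarith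
  simp only [Ff, h2]
  rw [h1]
  field_simp
  ring

lemma Ff_sub_anti {r : ℝ} (hr : 1 ≤ r) :
    AntitoneOn (fun x => Ff r x - Ff (r + 1) x) (Set.Ici (1:ℝ)) := by
  intro x hx y hy hxy
  have hx1 : (1:ℝ) ≤ x := Set.mem_Ici.mp hx
  have hy1 : (1:ℝ) ≤ y := Set.mem_Ici.mp hy
  have hr0 : (0:ℝ) < r := by linarith
  have hΓ : (0:ℝ) < Real.Gamma r := Real.Gamma_pos_of_pos hr0
  show Ff r y - Ff (r + 1) y ≤ Ff r x - Ff (r + 1) x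
  rw [Ff_sub_eq hr (by linarith : (0:ℝ) ≤ x), Ff_sub_eq hr (by linarith : (0:ℝ) ≤ y)]
  apply (div_le_div_iff_of_pos_right hΓ).mpr
  have h1 : phi r y ≤ phi r x := phi_anti hr (by linarith) hxy
  have h2 : (0:ℝ) ≤ 1 - 1 / r := by
    have : 1 / r ≤ 1 := by
      rw [div_le_one hr0]; exact hr
    linarith
  have h3 : 1 / (r ^ 2 * (r + y)) ≤ 1 / (r ^ 2 * (r + x)) := by
    apply one_div_le_one_div_of_le (by positivity)
    have : r + x ≤ r + y := by linarith
    nlinarith [sq_nonneg r]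
  have h4 : (1 - 1 / r) * phi r y ≤ (1 - 1 / r) * phi r x :=
    mul_le_mul_of_nonneg_left h1 h2
  linarith

theorem gammabar_antitone (r : ℝ) (hr : 1 ≤ r) (γ₁ γ₂ : ℝ)
    (h₁ : Tendsto (aseq r) atTop (𝓝 γ₁))
    (h₂ : Tendsto (aseq (r + 1)) atTop (𝓝 γ₂)) :
    γ₂ ≤ γ₁ := by
  have hr1 : (1:ℝ) ≤ r + 1 := by linarith
  have key : ∀ n : ℕ, 1 ≤ n → 0 ≤ aseq r n - aseq (r + 1) n := by
    intro n hn
    have hn' : (1:ℝ) ≤ (n : ℝ) := by exact_mod_cast hn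
    have hsub : Set.uIcc (1:ℝ) (n:ℝ) ⊆ Set.Ici (1:ℝ) := by
      rw [Set.uIcc_of_le hn']
      exact fun x hx => hx.1
    -- rewrite the sums
    have e1 : ∀ s : ℝ, 1 ≤ s → ∑ k ∈ Finset.Icc 1 (n - 1), hyp s k / rise k s
        = ∑ k ∈ Finset.Icc 1 (n - 1), Ff s k := by
      intro s hs
      refine Finset.sum_congr rfl fun k hk => ?_
      have hk1 : 1 ≤ k := (Finset.mem_Icc.mp hk).1
      exact hyp_div_rise hs (by exact_mod_cast hk1)
    have e2 : ∀ s : ℝ, 1 ≤ s → (∫ x in (1:ℝ)..(n:ℝ), hyp s x / rise x s)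
        = ∫ x in (1:ℝ)..(n:ℝ), Ff s x := by
      intro s hs
      refine intervalIntegral.integral_congr fun x hx => ?_
      exact hyp_div_rise hs (hsub hx)
    have hFint : IntervalIntegrable (Ff r) volume 1 (n:ℝ) :=
      ((Ff_anti hr).mono hsub).intervalIntegrable
    have hGint : IntervalIntegrable (Ff (r + 1)) volume 1 (n:ℝ) :=
      ((Ff_anti hr1).mono hsub).intervalIntegrable
    have e3 : (∫ x in (1:ℝ)..(n:ℝ), Ff r x) - ∫ x in (1:ℝ)..(n:ℝ), Ff (r + 1) x
        = ∫ x in (1:ℝ)..(n:ℝ), (Ff r x - Ff (r + 1) x) :=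
      (intervalIntegral.integral_sub hFint hGint).symm
    have hIco : Finset.Ico 1 n = Finset.Icc 1 (n - 1) := by
      rw [← Finset.Ico_add_one_right_eq_Icc]
      congr 1
      omega
    have e4 : (∫ x in (1:ℝ)..(n:ℝ), (Ff r x - Ff (r + 1) x))
        ≤ ∑ k ∈ Finset.Icc 1 (n - 1), (Ff r (k:ℝ) - Ff (r + 1) (k:ℝ)) := by
      have hanti : AntitoneOn (fun x => Ff r x - Ff (r + 1) x)
          (Set.Icc ((1:ℕ):ℝ) ((n:ℕ):ℝ)) := by
        apply (Ff_sub_anti hr).mono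
        intro x hx
        have := hx.1
        rw [Nat.cast_one] at this
        exact this
      have h := AntitoneOn.integral_le_sum_Ico hn hanti
      rw [Nat.cast_one] at h
      rwa [hIco] at h
    have expand : aseq r n - aseq (r + 1) n
        = ∑ k ∈ Finset.Icc 1 (n - 1), (Ff r (k:ℝ) - Ff (r + 1) (k:ℝ))
          - ∫ x in (1:ℝ)..(n:ℝ), (Ff r x - Ff (r + 1) x) := by
      rw [aseq, aseq, e1 r hr, e1 (r + 1) hr1, e2 r hr, e2 (r + 1) hr1,
        Finset.sum_sub_distrib, ← e3]
      ring
    rw [expand]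
    linarith [e4]
  have hs := h₁.sub h₂
  have h0 : (0:ℝ) ≤ γ₁ - γ₂ :=
    ge_of_tendsto hs (eventually_atTop.mpr ⟨1, key⟩)
  linarith
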